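/- Let L/K be a Galois extension of number fields, F the Galois closure of L over Q, and C a conjugacy class of Gal(L/K). Then there exists a conjugacy class C' of Gal(F/Q) such that for every rational prime p with Frobenius class (F/Q, p) = C', there is a prime ideal P of K above p with Frobenius class (L/K, P) = C and N(P) = p. -/

import Mathlib

open NumberField

open Polynomial in
/-- A field of prime characteristic `p` in which every element satisfies `x ^ p = x`
has exactly `p` elements. -/
lemma aux_card_eq (R : Type*) [CommRing R] [IsDomain R] (p : ℕ) (hp : p.Prime)
    (h0 : (p : R) = 0) (h : ∀ x : R, x ^ p = x) : Nat.card R = p := by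
  haveI : Fact p.Prime := ⟨hp⟩
  have hchar : CharP R p := by
    have hd : ringChar R ∣ p := ringChar.dvd h0
    rcases (Nat.Prime.eq_one_or_self_of_dvd hp _ hd) with h1 | h1
    · exact absurd (CharP.ringChar_ne_one (R := R)) (by simp [h1])
    · rw [← h1]; exact ringChar.charP R
  set f : R[X] := X ^ p - X with hf
  have hfne : f ≠ 0 := by
    intro hzero
    have : f.coeff p = 0 := by rw [hzero]; simp
    rw [hf] at this
    rw [coeff_sub, coeff_X_pow, coeff_X, if_pos rfl, if_neg hp.one_lt.ne] at this
    simp at this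
  have hroot : ∀ x : R, f.IsRoot x := by
    intro x
    simp [hf, IsRoot, h x]
  have hfin : Finite R := by
    rw [← Set.finite_univ_iff]
    exact (Polynomial.finite_setOf_isRoot hfne).subset (fun x _ => hroot x)
  haveI := Fintype.ofFinite R
  classical
  have hub : Fintype.card R ≤ p := by
    have hsub : (Finset.univ : Finset R) ⊆ f.roots.toFinset := by
      intro x _
      rw [Multiset.mem_toFinset, mem_roots hfne]
      exact hroot x
    calc Fintype.card R = (Finset.univ : Finset R).card := rfl
      _ ≤ f.roots.toFinset.card := Finset.card_le_card hsub
      _ ≤ Multiset.card f.roots := f.roots.toFinset_card_le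
      _ ≤ f.natDegree := f.card_roots'
      _ ≤ p := by
          apply le_trans (natDegree_sub_le _ _)
          simp [natDegree_X_pow, natDegree_X, hp.one_lt.le]
  have hlb : p ≤ Fintype.card R := by
    have : Function.Injective (ZMod.castHom (dvd_refl p) R) :=
      (ZMod.castHom (dvd_refl p) R).injective
    calc p = Fintype.card (ZMod p) := (ZMod.card p).symm
      _ ≤ Fintype.card R := Fintype.card_le_of_injective _ this
  rw [Nat.card_eq_fintype_card]
  omega

set_option maxHeartbeats 1000000 in
set_option synthInstance.maxHeartbeats 400000 in
/-- Proposition 3.2 of the paper.  Let `L/K` be a Galois extension of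
number fields, `F` the Galois closure of `L` over `ℚ` (modelled as a number field containing
`L` that is Galois over `ℚ`), and `C` a conjugacy class of `Gal(L/K)`.  Then there exists a
conjugacy class `C'` of `Gal(F/ℚ)` such that for every rational prime `p`, unramified in `F`,
with Frobenius class `(F/ℚ, p) = C'`, there is a prime ideal `P` of `K` above `p` with
Frobenius class `(L/K, P) = C` and `N(P) = p`.  The Frobenius class of a prime is witnessed
by a prime above it together with an automorphism stabilizing that prime and inducing the
appropriate power map on the residue field. -/
theorem stmt4 (K L F : Type) [Field K] [Field L] [Field F]
    [NumberField K] [NumberField L] [NumberField F]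
    [Algebra ℚ K] [Algebra K L] [Algebra L F] [Algebra K F]
    [IsScalarTower ℚ K L] [IsScalarTower K L F] [IsScalarTower ℚ K F]
    [IsGalois K L] [IsGalois ℚ F]
    (C : ConjClasses (L ≃ₐ[K] L)) :
    ∃ C' : ConjClasses (F ≃ₐ[ℚ] F),
      ∀ p : ℕ, p.Prime →
        -- `p` is unramified in `F`
        (∀ Qf : Ideal (𝓞 F), Qf.IsPrime → (p : 𝓞 F) ∈ Qf →
          Ideal.ramificationIdx' (Ideal.span {(p : ℤ)}) Qf = 1) →
        -- the Frobenius class `(F/ℚ, p)` equals `C'`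
        (∃ (Qf : Ideal (𝓞 F)) (σ : F ≃ₐ[ℚ] F), Qf.IsPrime ∧
          Ideal.comap (algebraMap ℤ (𝓞 F)) Qf = Ideal.span {(p : ℤ)} ∧
          Ideal.comap (galRestrict ℤ ℚ F (𝓞 F) σ) Qf = Qf ∧
          (∀ x : 𝓞 F, galRestrict ℤ ℚ F (𝓞 F) σ x - x ^ p ∈ Qf) ∧
          ConjClasses.mk σ = C') →
        -- then there is a degree-one prime `P` of `K` above `p` with `(L/K, P) = C`
        ∃ P : Ideal (𝓞 K), P.IsPrime ∧
          Ideal.comap (algebraMap ℤ (𝓞 K)) P = Ideal.span {(p : ℤ)} ∧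
          Ideal.absNorm P = p ∧
          ∃ (Q : Ideal (𝓞 L)) (τ : L ≃ₐ[K] L), Q.IsPrime ∧
            Ideal.comap (algebraMap (𝓞 K) (𝓞 L)) Q = P ∧
            Ideal.comap (galRestrict (𝓞 K) K L (𝓞 L) τ) Q = Q ∧
            (∀ x : 𝓞 L, galRestrict (𝓞 K) K L (𝓞 L) τ x - x ^ Ideal.absNorm P ∈ Q) ∧
            ConjClasses.mk τ = C := by
  haveI : IsGalois K F := IsGalois.tower_top_of_isGalois ℚ K F
  -- pick a representative of `C` and lift it to `Gal(F/K)`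
  obtain ⟨τ₀, hτ₀⟩ := C.exists_rep
  obtain ⟨σ₀, hσ₀⟩ := AlgEquiv.restrictNormalHom_surjective (K₁ := L) (E := F) τ₀
  set σ₀' : F ≃ₐ[ℚ] F := AlgEquiv.restrictScalars ℚ σ₀ with hσ₀'def
  refine ⟨ConjClasses.mk σ₀', ?_⟩
  intro p hp _hunram ⟨Qf0, σ, hQf0p, hQf0comap, hQf0stab, hQf0frob, hmkσ⟩
  -- conjugate the Frobenius prime so that `σ₀'` itself is a Frobenius at `Qf`
  have hconj : IsConj σ σ₀' := (ConjClasses.mk_eq_mk_iff_isConj).mp hmkσ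
  obtain ⟨g, hg⟩ := isConj_iff.mp hconj
  set G := galRestrict ℤ ℚ F (𝓞 F) with hGdef
  set e : (𝓞 F) ≃ₐ[ℤ] (𝓞 F) := G g with hedef
  set e' : (𝓞 F) ≃ₐ[ℤ] (𝓞 F) := G g⁻¹ with he'def
  have hee' : ∀ y, e (e' y) = y := by
    intro y
    rw [hedef, he'def, ← AlgEquiv.mul_apply, ← map_mul, mul_inv_cancel, map_one]
    rfl
  have hkey : ∀ x, G σ₀' x = e (G σ (e' x)) := by
    intro x
    rw [hedef, he'def, ← AlgEquiv.mul_apply, ← AlgEquiv.mul_apply, ← map_mul, ← map_mul, hg]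
  obtain ⟨Qf, hQfdef⟩ : ∃ I : Ideal (𝓞 F), I = Ideal.comap e' Qf0 := ⟨_, rfl⟩
  have hmemQf : ∀ x, x ∈ Qf ↔ e' x ∈ Qf0 := fun x => by rw [hQfdef]; exact Iff.rfl
  have hQfp : Qf.IsPrime := hQfdef ▸ Ideal.IsPrime.comap _
  have hmemQf0stab : ∀ y, G σ y ∈ Qf0 ↔ y ∈ Qf0 := by
    intro y
    constructor
    · intro hy
      have : y ∈ Ideal.comap (G σ) Qf0 := hy
      rwa [hQf0stab] at this
    · intro hy
      have : y ∈ Ideal.comap (G σ) Qf0 := by rwa [hQf0stab]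
      exact this
  have hmemQfstab : ∀ x, G σ₀' x ∈ Qf ↔ x ∈ Qf := by
    intro x
    rw [hmemQf, hmemQf, hkey]
    have : e' (e (G σ (e' x))) = G σ (e' x) := by
      apply e.injective
      rw [hee']
    rw [this, hmemQf0stab]
  have hQffrob : ∀ x : 𝓞 F, G σ₀' x - x ^ p ∈ Qf := by
    intro x
    rw [hmemQf, map_sub, map_pow, hkey]
    have : e' (e (G σ (e' x))) = G σ (e' x) := by
      apply e.injective; rw [hee']
    rw [this]
    exact hQf0frob (e' x)
  have hQfcomap : Ideal.comap (algebraMap ℤ (𝓞 F)) Qf = Ideal.span {(p : ℤ)} := by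
    rw [← hQf0comap]
    ext n
    rw [Ideal.mem_comap, Ideal.mem_comap, hmemQf, AlgEquiv.commutes]
  -- `σ₀'` fixes the image of `𝓞 K` in `𝓞 F`
  have hcoeF : ∀ z : 𝓞 F, (algebraMap (𝓞 F) F) (G σ₀' z) = σ₀' (algebraMap (𝓞 F) F z) :=
    fun z => algebraMap_galRestrict_apply ℤ σ₀' z
  have hσ₀'fix : ∀ a : K, σ₀' (algebraMap K F a) = algebraMap K F a := fun a => σ₀.commutes a
  have hGfix : ∀ x : 𝓞 K, G σ₀' (algebraMap (𝓞 K) (𝓞 F) x) = algebraMap (𝓞 K) (𝓞 F) x := by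
    intro x
    apply NumberField.RingOfIntegers.coe_injective
    rw [hcoeF]
    have h1 : (algebraMap (𝓞 F) F) (algebraMap (𝓞 K) (𝓞 F) x)
        = algebraMap K F (algebraMap (𝓞 K) K x) := by
      rw [← IsScalarTower.algebraMap_apply, IsScalarTower.algebraMap_apply (𝓞 K) K F]
    rw [h1, hσ₀'fix]
  -- the primes below in `K` and `L`
  obtain ⟨P, hPdef⟩ : ∃ I : Ideal (𝓞 K), I = Ideal.comap (algebraMap (𝓞 K) (𝓞 F)) Qf := ⟨_, rfl⟩
  obtain ⟨Q, hQdef⟩ : ∃ I : Ideal (𝓞 L), I = Ideal.comap (algebraMap (𝓞 L) (𝓞 F)) Qf := ⟨_, rfl⟩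
  have hPprime : P.IsPrime := hPdef ▸ Ideal.IsPrime.comap _
  have hQprime : Q.IsPrime := hQdef ▸ Ideal.IsPrime.comap _
  have hmemP : ∀ x : 𝓞 K, x ∈ P ↔ algebraMap (𝓞 K) (𝓞 F) x ∈ Qf := fun x => by
    rw [hPdef]; exact Iff.rfl
  have hmemQ : ∀ x : 𝓞 L, x ∈ Q ↔ algebraMap (𝓞 L) (𝓞 F) x ∈ Qf := fun x => by
    rw [hQdef]; exact Iff.rfl
  have hZK : ∀ n : ℤ, algebraMap (𝓞 K) (𝓞 F) (algebraMap ℤ (𝓞 K) n) = algebraMap ℤ (𝓞 F) n := by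
    intro n
    rw [algebraMap_int_eq, algebraMap_int_eq]
    simp
  have hPcomap : Ideal.comap (algebraMap ℤ (𝓞 K)) P = Ideal.span {(p : ℤ)} := by
    rw [← hQfcomap]
    ext n
    rw [Ideal.mem_comap, Ideal.mem_comap, hmemP, hZK]
  -- the frobenius property descends to `𝓞 K`
  have hfrobK : ∀ x : 𝓞 K, x - x ^ p ∈ P := by
    intro x
    rw [hmemP, map_sub, map_pow]
    have := hQffrob (algebraMap (𝓞 K) (𝓞 F) x)
    rwa [hGfix] at this
  -- `P` has absolute norm `p`
  have hPbot : P ≠ ⊥ := by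
    intro hbot
    rw [hbot] at hPcomap
    have : ((p : ℤ)) ∈ (Ideal.comap (algebraMap ℤ (𝓞 K)) (⊥ : Ideal (𝓞 K))) := by
      rw [hPcomap]; exact Ideal.subset_span rfl
    rw [Ideal.mem_comap, Ideal.mem_bot] at this
    have hpz : (p : ℤ) = 0 := by
      have hinj : Function.Injective (algebraMap ℤ (𝓞 K)) := by
        rw [algebraMap_int_eq]
        exact fun a b hab => by simpa using hab
      exact hinj (by simpa using this)
    exact_mod_cast hp.ne_zero (by exact_mod_cast hpz)
  haveI := hPprime
  have hpP : (p : 𝓞 K) ∈ P := by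
    have : ((p : ℤ)) ∈ Ideal.comap (algebraMap ℤ (𝓞 K)) P := by
      rw [hPcomap]; exact Ideal.subset_span rfl
    rw [Ideal.mem_comap, algebraMap_int_eq] at this
    simpa using this
  have habs : Ideal.absNorm P = p := by
    rw [Ideal.absNorm_apply, Submodule.cardQuot_apply]
    apply aux_card_eq _ p hp
    · rw [show ((p : ℕ) : 𝓞 K ⧸ P) = Ideal.Quotient.mk P ((p : ℕ) : 𝓞 K) from
        (map_natCast (Ideal.Quotient.mk P) p).symm]
      exact (Ideal.Quotient.eq_zero_iff_mem).mpr hpP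
    · intro x
      obtain ⟨y, rfl⟩ := Ideal.Quotient.mk_surjective x
      have : Ideal.Quotient.mk P (y ^ p - y) = 0 :=
        (Ideal.Quotient.eq_zero_iff_mem).mpr (by
          have := hfrobK y
          have h2 : y ^ p - y = -(y - y ^ p) := by ring
          rw [h2]; exact P.neg_mem this)
      rw [map_sub, map_pow, sub_eq_zero] at this
      exact this
  -- relate `τ₀` on `𝓞 L` with `σ₀'` on `𝓞 F`
  set Gl := galRestrict (𝓞 K) K L (𝓞 L) with hGldef
  have hcomm : ∀ x : 𝓞 L,
      algebraMap (𝓞 L) (𝓞 F) (Gl τ₀ x) = G σ₀' (algebraMap (𝓞 L) (𝓞 F) x) := by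
    intro x
    apply NumberField.RingOfIntegers.coe_injective
    rw [hcoeF]
    have h1 : ∀ z : 𝓞 L, (algebraMap (𝓞 F) F) (algebraMap (𝓞 L) (𝓞 F) z)
        = algebraMap L F (algebraMap (𝓞 L) L z) := by
      intro z
      rw [← IsScalarTower.algebraMap_apply, IsScalarTower.algebraMap_apply (𝓞 L) L F]
    rw [h1, h1]
    rw [algebraMap_galRestrict_apply]
    have h3 : σ₀' (algebraMap L F (algebraMap (𝓞 L) L x))
        = algebraMap L F (τ₀ (algebraMap (𝓞 L) L x)) := by
      have h4 : τ₀ = σ₀.restrictNormal L := by rw [← hσ₀]; rfl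
      rw [h4]
      exact (AlgEquiv.restrictNormal_commutes σ₀ L (algebraMap (𝓞 L) L x)).symm
    rw [h3]
  have hQstab : Ideal.comap (Gl τ₀) Q = Q := by
    ext x
    rw [Ideal.mem_comap, hmemQ, hmemQ, hcomm, hmemQfstab]
  have hQfrobL : ∀ x : 𝓞 L, Gl τ₀ x - x ^ Ideal.absNorm P ∈ Q := by
    intro x
    rw [habs, hmemQ, map_sub, map_pow, hcomm]
    exact hQffrob (algebraMap (𝓞 L) (𝓞 F) x)
  have hQP : Ideal.comap (algebraMap (𝓞 K) (𝓞 L)) Q = P := by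
    ext x
    rw [Ideal.mem_comap, hmemQ, hmemP, ← IsScalarTower.algebraMap_apply]
  exact ⟨P, hPprime, hPcomap, habs, Q, τ₀, hQprime, hQP, hQstab, hQfrobL, hτ₀⟩
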